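/- Let d > 0, let V : ℝ² × ℝ → ℝ be 𝕃-periodic in its first variable with V(R_{2π/3}⁻¹ x, z) = V(x, z) for all (x,z), let W : ℝ → ℝ, and let u₁, u₂ : ℝ² × ℝ → ℂ be 𝕃-periodic in their first variable satisfying u_j(R_{2π/3}⁻¹ x, z) = ω^j e^{i(K − R_{2π/3}K)·x} u_j(x, z) for j = 1, 2 and all (x,z), where ω := e^{2πi/3}, with enough integrability for the integrals below to converge absolutely. For j, j' ∈ {1,2} define 𝕍_{jj'}(X) := e^{−i(JK)·X} (((V + W̃) u_j, u_{j'}))_d^{+−}(X), where (V + W̃)u_j denotes the function (x,z) ↦ (V(x,z) + W(z)) u_j(x,z). Then for all X ∈ ℝ²: 𝕍_{jj'}(R_{2π/3}⁻¹ X) = ω^{j'−j} 𝕍_{jj'}(X); in particular 𝕍_{11} and 𝕍_{22} are invariant under the rotation R_{2π/3}, while 𝕍_{12}(R_{2π/3}⁻¹X) = ω 𝕍_{12}(X) and 𝕍_{21}(R_{2π/3}⁻¹X) = ω̄ 𝕍_{21}(X). -/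

import Mathlib

noncomputable section

open MeasureTheory Real Complex

abbrev Pt : Type := ℝ × ℝ

/-- Euclidean dot product on ℝ². -/
def dot (v w : Pt) : ℝ := v.1 * w.1 + v.2 * w.2

/-- The matrix J acting by J(x₁,x₂) = (x₂, −x₁). -/
def Jmat (v : Pt) : Pt := (v.2, -v.1)

/-- Rotation of ℝ² by angle θ. -/
def rotA (θ : ℝ) (v : Pt) : Pt :=
  (Real.cos θ * v.1 - Real.sin θ * v.2, Real.sin θ * v.1 + Real.cos θ * v.2)

/-- Lattice vector a₁ = a₀(1/2, −√3/2). -/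
def av1 (a0 : ℝ) : Pt := (a0 / 2, -(Real.sqrt 3 * a0 / 2))

/-- Lattice vector a₂ = a₀(1/2, √3/2). -/
def av2 (a0 : ℝ) : Pt := (a0 / 2, Real.sqrt 3 * a0 / 2)

/-- The graphene lattice 𝕃 = ℤa₁ + ℤa₂. -/
def lat (a0 : ℝ) : AddSubgroup Pt := AddSubgroup.closure {av1 a0, av2 a0}

/-- The moiré lattice 𝕃_M = J𝕃. -/
def latM (a0 : ℝ) : AddSubgroup Pt := AddSubgroup.closure {Jmat (av1 a0), Jmat (av2 a0)}

/-- Dual basis vector a₁*. -/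
def as1 (a0 : ℝ) : Pt := (2 * π / a0, -(2 * π / (Real.sqrt 3 * a0)))

/-- Dual basis vector a₂*. -/
def as2 (a0 : ℝ) : Pt := (2 * π / a0, 2 * π / (Real.sqrt 3 * a0))

/-- The Dirac point K = (a₁* + a₂*)/3. -/
def Kpt (a0 : ℝ) : Pt := (3 : ℝ)⁻¹ • (as1 a0 + as2 a0)

/-- A dual lattice vector G = m₁a₁* + m₂a₂*. -/
def dualVec (a0 : ℝ) (m : ℤ × ℤ) : Pt := (m.1 : ℝ) • as1 a0 + (m.2 : ℝ) • as2 a0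

/-- 𝕃-periodicity in the first variable. -/
def LPeriodic (a0 : ℝ) (f : Pt → ℝ → ℂ) : Prop :=
  ∀ R ∈ lat a0, ∀ (x : Pt) (z : ℝ), f (x + R) z = f x z

/-- K-quasiperiodicity in the first variable. -/
def KQuasiperiodic (a0 : ℝ) (Φ : Pt → ℝ → ℂ) : Prop :=
  ∀ R ∈ lat a0, ∀ (x : Pt) (z : ℝ),
    Φ (x + R) z = Complex.exp (Complex.I * (dot (Kpt a0) R : ℂ)) * Φ x z

/-- ω = e^{2πi/3}. -/
def ωc : ℂ := Complex.exp (2 * Real.pi * Complex.I / 3)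

/-- The integrand of ((f,g))_d^{ηη'}(X). -/
def braFn (d η η' : ℝ) (f g : Pt → ℝ → ℂ) (X : Pt) (p : Pt × ℝ) : ℂ :=
  (starRingEnd ℂ) (f (p.1 - (η / 2) • Jmat X) (p.2 - η * d / 2)) *
    g (p.1 - (η' / 2) • Jmat X) (p.2 - η' * d / 2)

/-- ((f,g))_d^{ηη'}(X), the interlayer pairing. -/
def bra (d : ℝ) (Ω : Set Pt) (η η' : ℝ) (f g : Pt → ℝ → ℂ) (X : Pt) : ℂ :=
  ∫ p in Ω ×ˢ (Set.univ : Set ℝ), braFn d η η' f g X p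
namespace Stmt17Aux

lemma rot_add (θ : ℝ) (a b : Pt) : rotA θ (a + b) = rotA θ a + rotA θ b := by
  simp only [rotA, Prod.ext_iff, Prod.fst_add, Prod.snd_add]
  constructor <;> ring

lemma rot_zero (θ : ℝ) : rotA θ (0 : Pt) = 0 := by
  simp [rotA, Prod.ext_iff]

lemma rot_neg (θ : ℝ) (v : Pt) : rotA θ (-v) = -rotA θ v := by
  simp only [rotA, Prod.ext_iff, Prod.fst_neg, Prod.snd_neg]
  constructor <;> ring

lemma rot_smul (θ c : ℝ) (v : Pt) : rotA θ (c • v) = c • rotA θ v := by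
  simp only [rotA, Prod.ext_iff, Prod.smul_fst, Prod.smul_snd, smul_eq_mul]
  constructor <;> ring

lemma rot_sub_smul (θ c : ℝ) (a b : Pt) :
    rotA θ a - c • rotA θ b = rotA θ (a - c • b) := by
  simp only [rotA, Prod.ext_iff, Prod.fst_sub, Prod.snd_sub, Prod.smul_fst, Prod.smul_snd,
    smul_eq_mul]
  constructor <;> ring

lemma rot_rot (θ : ℝ) (v : Pt) : rotA (-θ) (rotA θ v) = v := by
  have h := Real.sin_sq_add_cos_sq θ
  simp only [rotA, Prod.ext_iff, Real.cos_neg, Real.sin_neg]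
  exact ⟨by linear_combination v.1 * h, by linear_combination v.2 * h⟩

lemma rot_rot' (θ : ℝ) (v : Pt) : rotA θ (rotA (-θ) v) = v := by
  simpa using rot_rot (-θ) v

lemma Jmat_rot (θ : ℝ) (v : Pt) : Jmat (rotA θ v) = rotA θ (Jmat v) := by
  simp only [Jmat, rotA, Prod.ext_iff]
  constructor <;> ring

lemma cos23 : Real.cos (2 * π / 3) = -(1/2) := by
  rw [show (2 * π / 3 : ℝ) = π - π / 3 by ring, Real.cos_pi_sub, Real.cos_pi_div_three]

lemma sin23 : Real.sin (2 * π / 3) = Real.sqrt 3 / 2 := by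
  rw [show (2 * π / 3 : ℝ) = π - π / 3 by ring, Real.sin_pi_sub, Real.sin_pi_div_three]

lemma sqrt3_sq : Real.sqrt 3 * Real.sqrt 3 = 3 := Real.mul_self_sqrt (by norm_num)

lemma rot_av1 (a0 : ℝ) : rotA (2 * π / 3) (av1 a0) = av2 a0 := by
  simp only [rotA, av1, av2, cos23, sin23, Prod.ext_iff]
  exact ⟨by linear_combination (a0/4) * sqrt3_sq, by ring⟩

lemma rot_av2 (a0 : ℝ) : rotA (2 * π / 3) (av2 a0) = -(av1 a0 + av2 a0) := by
  simp only [rotA, av1, av2, cos23, sin23, Prod.ext_iff, Prod.fst_add, Prod.snd_add,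
    Prod.fst_neg, Prod.snd_neg]
  exact ⟨by linear_combination (-(a0/4)) * sqrt3_sq, by ring⟩

lemma rot_av1' (a0 : ℝ) : rotA (-(2 * π / 3)) (av1 a0) = -(av1 a0 + av2 a0) := by
  simp only [rotA, av1, av2, Real.cos_neg, Real.sin_neg, cos23, sin23, Prod.ext_iff,
    Prod.fst_add, Prod.snd_add, Prod.fst_neg, Prod.snd_neg]
  exact ⟨by linear_combination (-(a0/4)) * sqrt3_sq, by ring⟩

lemma rot_av2' (a0 : ℝ) : rotA (-(2 * π / 3)) (av2 a0) = av1 a0 := by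
  simp only [rotA, av1, av2, Real.cos_neg, Real.sin_neg, cos23, sin23, Prod.ext_iff]
  exact ⟨by linear_combination (a0/4) * sqrt3_sq, by ring⟩

lemma av1_mem (a0 : ℝ) : av1 a0 ∈ lat a0 := AddSubgroup.subset_closure (by simp)
lemma av2_mem (a0 : ℝ) : av2 a0 ∈ lat a0 := AddSubgroup.subset_closure (by simp)

lemma rot_lat (a0 : ℝ) {v : Pt} (hv : v ∈ lat a0) : rotA (2 * π / 3) v ∈ lat a0 := by
  refine AddSubgroup.closure_induction ?_ ?_ ?_ ?_ hv
  · rintro x hx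
    rcases hx with rfl | hx
    · rw [rot_av1]; exact av2_mem a0
    · rw [Set.mem_singleton_iff] at hx; subst hx
      rw [rot_av2]; exact neg_mem (add_mem (av1_mem a0) (av2_mem a0))
  · rw [rot_zero]; exact zero_mem _
  · intro x y _ _ hx hy; rw [rot_add]; exact add_mem hx hy
  · intro x _ hx; rw [rot_neg]; exact neg_mem hx

lemma rot_lat' (a0 : ℝ) {v : Pt} (hv : v ∈ lat a0) : rotA (-(2 * π / 3)) v ∈ lat a0 := by
  refine AddSubgroup.closure_induction ?_ ?_ ?_ ?_ hv
  · rintro x hx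
    rcases hx with rfl | hx
    · rw [rot_av1']; exact neg_mem (add_mem (av1_mem a0) (av2_mem a0))
    · rw [Set.mem_singleton_iff] at hx; subst hx
      rw [rot_av2']; exact av1_mem a0
  · rw [rot_zero]; exact zero_mem _
  · intro x y _ _ hx hy; rw [rot_add]; exact add_mem hx hy
  · intro x _ hx; rw [rot_neg]; exact neg_mem hx

/-- rotation as a linear map -/
def rotL (θ : ℝ) : Pt →ₗ[ℝ] Pt where
  toFun := rotA θ
  map_add' := rot_add θ
  map_smul' c v := rot_smul θ c v

lemma rot_det (θ : ℝ) : LinearMap.det (rotL θ) = 1 := by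
  rw [← LinearMap.det_toMatrix (Module.Basis.finTwoProd ℝ), Matrix.det_fin_two]
  simp [LinearMap.toMatrix_apply, Module.Basis.finTwoProd, rotL, rotA]
  nlinarith [Real.sin_sq_add_cos_sq θ]

lemma rot_mp (θ : ℝ) : MeasurePreserving (rotA θ) (volume : Measure Pt) volume := by
  have hc : Continuous (rotA θ) := (rotL θ).continuous_of_finiteDimensional
  refine ⟨hc.measurable, ?_⟩
  have h := Measure.map_linearMap_addHaar_eq_smul_addHaar (volume : Measure Pt) (f := rotL θ)
    (by rw [rot_det]; norm_num)
  rw [rot_det] at h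
  simp at h; exact h

/-- lattice is countable -/
lemma lat_countable (a0 : ℝ) : Countable (lat a0) := by
  let f : ℤ × ℤ →+ Pt :=
    { toFun := fun mn => mn.1 • av1 a0 + mn.2 • av2 a0
      map_zero' := by simp
      map_add' := by
        intro a b
        simp only [Prod.fst_add, Prod.snd_add, add_zsmul]
        abel }
  have hle : lat a0 ≤ f.range := by
    rw [lat, AddSubgroup.closure_le]
    rintro x hx
    rcases hx with rfl | hx
    · exact ⟨(1, 0), by simp [f]⟩
    · rw [Set.mem_singleton_iff] at hx; subst hx
      exact ⟨(0, 1), by simp [f]⟩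
  have hc : ((lat a0 : Set Pt)).Countable := by
    have : (Set.range f).Countable := Set.countable_range f
    exact this.mono fun x hx => hle hx
  exact hc.to_subtype

end Stmt17Aux
open Pointwise
namespace Stmt17Aux

/-- countability of the product subgroup -/
lemma latProd_countable (a0 : ℝ) :
    Countable ((lat a0).prod (⊥ : AddSubgroup ℝ)) := by
  have h1 : ((lat a0 : Set Pt)).Countable := Set.countable_coe_iff.mp (lat_countable a0)
  have h2 : (((lat a0).prod (⊥ : AddSubgroup ℝ) : AddSubgroup (Pt × ℝ)) : Set (Pt × ℝ)).Countable := by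
    rw [AddSubgroup.coe_prod]
    exact h1.prod (by simpa using Set.countable_singleton (0:ℝ))
  exact h2.to_subtype

lemma vadd_prod (a0 : ℝ) (g : (lat a0).prod (⊥ : AddSubgroup ℝ)) (s : Set Pt) :
    (g +ᵥ (s ×ˢ (Set.univ : Set ℝ)) : Set (Pt × ℝ)) =
      ((⟨(g : Pt × ℝ).1, (AddSubgroup.mem_prod.mp g.2).1⟩ : lat a0) +ᵥ s) ×ˢ (Set.univ : Set ℝ) := by
  ext p
  simp only [Set.mem_vadd_set_iff_neg_vadd_mem, Set.mem_prod, Set.mem_univ, and_true]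
  exact Iff.rfl

lemma fd_prod (a0 : ℝ) {s : Set Pt} (hs : IsAddFundamentalDomain (lat a0) s volume) :
    IsAddFundamentalDomain ((lat a0).prod (⊥ : AddSubgroup ℝ))
      (s ×ˢ (Set.univ : Set ℝ)) volume := by
  have hvol : (volume : Measure (Pt × ℝ)) = (volume : Measure Pt).prod volume := rfl
  constructor
  · rw [hvol]
    exact hs.nullMeasurableSet.prod MeasurableSet.univ.nullMeasurableSet
  · have h := hs.ae_covers
    rw [ae_iff] at h ⊢
    refine measure_mono_null (fun p hp => ?_)
      (?_ : volume (({x : Pt | ¬ ∃ g : lat a0, g +ᵥ x ∈ s}) ×ˢ (Set.univ : Set ℝ)) = 0)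
    · simp only [Set.mem_setOf_eq] at hp
      refine Set.mk_mem_prod ?_ trivial
      intro ⟨g, hg⟩
      exact hp ⟨⟨((g : Pt), 0), AddSubgroup.mem_prod.mpr ⟨g.2, AddSubgroup.mem_bot.mpr rfl⟩⟩,
        Set.mk_mem_prod hg trivial⟩
    · rw [hvol, Measure.prod_prod, h, zero_mul]
  · intro g h hne
    have key := vadd_prod a0
    have hne' : (⟨(g : Pt × ℝ).1, (AddSubgroup.mem_prod.mp g.2).1⟩ : lat a0) ≠
        ⟨(h : Pt × ℝ).1, (AddSubgroup.mem_prod.mp h.2).1⟩ := by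
      intro hcon
      apply hne
      have h1 : (g : Pt × ℝ).1 = (h : Pt × ℝ).1 := congrArg Subtype.val hcon
      have h2 : (g : Pt × ℝ).2 = (h : Pt × ℝ).2 := by
        rw [AddSubgroup.mem_bot.mp (AddSubgroup.mem_prod.mp g.2).2,
          AddSubgroup.mem_bot.mp (AddSubgroup.mem_prod.mp h.2).2]
      exact Subtype.ext (Prod.ext h1 h2)
    have hd := hs.aedisjoint hne'
    have hd' : volume (((⟨(g : Pt × ℝ).1, (AddSubgroup.mem_prod.mp g.2).1⟩ : lat a0) +ᵥ s) ∩
        ((⟨(h : Pt × ℝ).1, (AddSubgroup.mem_prod.mp h.2).1⟩ : lat a0) +ᵥ s)) = 0 := hd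
    show volume ((g +ᵥ s ×ˢ (Set.univ : Set ℝ)) ∩ (h +ᵥ s ×ˢ (Set.univ : Set ℝ))) = 0
    rw [key, key, Set.prod_inter_prod, Set.univ_inter, hvol, Measure.prod_prod, hd', zero_mul]

end Stmt17Aux
namespace Stmt17Aux

lemma fd_rot (a0 : ℝ) {Ω : Set Pt} (hΩ : IsAddFundamentalDomain (lat a0) Ω volume) :
    IsAddFundamentalDomain (lat a0) (rotA (-(2 * π / 3)) '' Ω) volume := by
  refine hΩ.image_of_equiv
    ⟨rotA (-(2 * π / 3)), rotA (2 * π / 3),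
      fun v => rot_rot' (2 * π / 3) v, fun v => rot_rot (2 * π / 3) v⟩
    (rot_mp (2 * π / 3)).quasiMeasurePreserving
    ⟨fun g => ⟨rotA (2 * π / 3) g, rot_lat a0 g.2⟩,
      fun g => ⟨rotA (-(2 * π / 3)) g, rot_lat' a0 g.2⟩,
      fun g => Subtype.ext (rot_rot (2 * π / 3) g),
      fun g => Subtype.ext (rot_rot' (2 * π / 3) g)⟩
    ?_
  intro g x
  show rotA (-(2 * π / 3)) (rotA (2 * π / 3) (g : Pt) + x) = (g : Pt) + rotA (-(2 * π / 3)) x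
  rw [rot_add, rot_rot]

lemma braFn_vadd (a0 d : ℝ) (f g : Pt → ℝ → ℂ) (hf : LPeriodic a0 f) (hg : LPeriodic a0 g)
    (Y : Pt) (G : (lat a0).prod (⊥ : AddSubgroup ℝ)) (p : Pt × ℝ) :
    braFn d 1 (-1) f g Y (G +ᵥ p) = braFn d 1 (-1) f g Y p := by
  obtain ⟨hP1, hP2⟩ := AddSubgroup.mem_prod.mp G.2
  have hz : (G : Pt × ℝ).2 = 0 := AddSubgroup.mem_bot.mp hP2
  show braFn d 1 (-1) f g Y ((G : Pt × ℝ) + p) = _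
  simp only [braFn]
  have key : ∀ (c : ℝ) (w : Pt), ((G : Pt × ℝ) + p).1 - c • w = (p.1 - c • w) + (G : Pt × ℝ).1 := by
    intro c w; rw [Prod.fst_add]; abel
  have keyz : ∀ t : ℝ, ((G : Pt × ℝ) + p).2 - t = p.2 - t := by
    intro t; rw [Prod.snd_add, hz, zero_add]
  rw [key, key, keyz, keyz, hf _ hP1, hg _ hP1]

lemma conj_exp_I (r : ℝ) :
    (starRingEnd ℂ) (Complex.exp (Complex.I * (r : ℂ))) = Complex.exp (-(Complex.I * (r : ℂ))) := by
  rw [← Complex.exp_conj, map_mul, Complex.conj_I, Complex.conj_ofReal]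
  congr 1; ring

lemma ωc_ne : ωc ≠ 0 := Complex.exp_ne_zero _

lemma conj_ωc : (starRingEnd ℂ) ωc = ωc⁻¹ := by
  rw [ωc, ← Complex.exp_conj, ← Complex.exp_neg]
  congr 1
  simp only [map_div₀, map_mul, Complex.conj_I, Complex.conj_ofReal, map_ofNat]
  ring

lemma conj_ωc_zpow (j : ℤ) : (starRingEnd ℂ) (ωc ^ j) = ωc ^ (-j) := by
  rw [map_zpow₀, conj_ωc, inv_zpow, ← zpow_neg]

/-- the rotation on Pt × ℝ as a measurable equivalence -/
def rotEquivM : (Pt × ℝ) ≃ᵐ (Pt × ℝ) :=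
  { toFun := fun p => (rotA (-(2 * π / 3)) p.1, p.2)
    invFun := fun p => (rotA (2 * π / 3) p.1, p.2)
    left_inv := fun p => Prod.ext (rot_rot' (2 * π / 3) p.1) rfl
    right_inv := fun p => Prod.ext (rot_rot (2 * π / 3) p.1) rfl
    measurable_toFun :=
      ((rot_mp (-(2 * π / 3))).measurable.comp measurable_fst).prodMk measurable_snd
    measurable_invFun :=
      ((rot_mp (2 * π / 3)).measurable.comp measurable_fst).prodMk measurable_snd }

lemma rotEmb : MeasurableEmbedding (fun p : Pt × ℝ => (rotA (-(2 * π / 3)) p.1, p.2)) :=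
  rotEquivM.measurableEmbedding

end Stmt17Aux
open Stmt17Aux in
theorem stmt17 (a0 d : ℝ) (ha0 : 0 < a0) (hd : 0 < d) (Ω : Set Pt)
    (hΩ : IsAddFundamentalDomain (lat a0) Ω volume)
    (V : Pt → ℝ → ℝ) (W : ℝ → ℝ) (u : ℤ → Pt → ℝ → ℂ)
    (hVper : ∀ R ∈ lat a0, ∀ (x : Pt) (z : ℝ), V (x + R) z = V x z)
    (hVrot : ∀ (x : Pt) (z : ℝ), V (rotA (-(2 * π / 3)) x) z = V x z)
    (huper : ∀ j ∈ ({1, 2} : Set ℤ), LPeriodic a0 (u j))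
    (hurot : ∀ j ∈ ({1, 2} : Set ℤ), ∀ (x : Pt) (z : ℝ),
      u j (rotA (-(2 * π / 3)) x) z =
        ωc ^ j * Complex.exp (Complex.I *
          (dot (Kpt a0 - rotA (2 * π / 3) (Kpt a0)) x : ℂ)) * u j x z)
    (hint : ∀ j ∈ ({1, 2} : Set ℤ), ∀ j' ∈ ({1, 2} : Set ℤ), ∀ X : Pt,
      IntegrableOn
        (braFn d 1 (-1) (fun x z => ((V x z + W z : ℝ) : ℂ) * u j x z) (u j') X)
        (Ω ×ˢ (Set.univ : Set ℝ)) volume)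
    (𝕍 : ℤ → ℤ → Pt → ℂ)
    (h𝕍 : ∀ (j j' : ℤ) (X : Pt), 𝕍 j j' X =
      Complex.exp (-Complex.I * (dot (Jmat (Kpt a0)) X : ℂ)) *
        bra d Ω 1 (-1) (fun x z => ((V x z + W z : ℝ) : ℂ) * u j x z) (u j') X) :
    (∀ j ∈ ({1, 2} : Set ℤ), ∀ j' ∈ ({1, 2} : Set ℤ), ∀ X : Pt,
      𝕍 j j' (rotA (-(2 * π / 3)) X) = ωc ^ (j' - j) * 𝕍 j j' X) ∧
    (∀ X : Pt, 𝕍 1 1 (rotA (-(2 * π / 3)) X) = 𝕍 1 1 X) ∧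
    (∀ X : Pt, 𝕍 2 2 (rotA (-(2 * π / 3)) X) = 𝕍 2 2 X) ∧
    (∀ X : Pt, 𝕍 1 2 (rotA (-(2 * π / 3)) X) = ωc * 𝕍 1 2 X) ∧
    (∀ X : Pt, 𝕍 2 1 (rotA (-(2 * π / 3)) X) = (starRingEnd ℂ) ωc * 𝕍 2 1 X) := by
  have main : ∀ j ∈ ({1, 2} : Set ℤ), ∀ j' ∈ ({1, 2} : Set ℤ), ∀ X : Pt,
      𝕍 j j' (rotA (-(2 * π / 3)) X) = ωc ^ (j' - j) * 𝕍 j j' X := by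
    intro j hj j' hj' X
    -- the pointwise covariance of the integrand
    have hpt : ∀ p : Pt × ℝ,
        braFn d 1 (-1) (fun x z => ((V x z + W z : ℝ) : ℂ) * u j x z) (u j')
            (rotA (-(2 * π / 3)) X) (rotA (-(2 * π / 3)) p.1, p.2) =
          (ωc ^ (j' - j) * Complex.exp (Complex.I *
              (dot (Kpt a0 - rotA (2 * π / 3) (Kpt a0)) (Jmat X) : ℂ))) *
            braFn d 1 (-1) (fun x z => ((V x z + W z : ℝ) : ℂ) * u j x z) (u j') X p := by
      intro p
      simp only [braFn]
      rw [Jmat_rot, rot_sub_smul, rot_sub_smul, hVrot, hurot j hj, hurot j' hj']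
      simp only [map_mul, Complex.conj_ofReal, conj_ωc_zpow, conj_exp_I]
      have hdot : dot (Kpt a0 - rotA (2 * π / 3) (Kpt a0)) (p.1 - (-1 / 2 : ℝ) • Jmat X) -
          dot (Kpt a0 - rotA (2 * π / 3) (Kpt a0)) (p.1 - (1 / 2 : ℝ) • Jmat X) =
          dot (Kpt a0 - rotA (2 * π / 3) (Kpt a0)) (Jmat X) := by
        simp only [dot, Prod.fst_sub, Prod.snd_sub, Prod.smul_fst, Prod.smul_snd, smul_eq_mul,
          Jmat]
        ring
      have h2 : Complex.exp (-(Complex.I *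
            ((dot (Kpt a0 - rotA (2 * π / 3) (Kpt a0)) (p.1 - (1 / 2 : ℝ) • Jmat X) : ℝ) : ℂ))) *
          Complex.exp (Complex.I *
            ((dot (Kpt a0 - rotA (2 * π / 3) (Kpt a0)) (p.1 - (-1 / 2 : ℝ) • Jmat X) : ℝ) : ℂ)) =
          Complex.exp (Complex.I *
            ((dot (Kpt a0 - rotA (2 * π / 3) (Kpt a0)) (Jmat X) : ℝ) : ℂ)) := by
        rw [← Complex.exp_add]
        congr 1
        have hc := congrArg (fun r : ℝ => (r : ℂ)) hdot
        push_cast at hc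
        linear_combination Complex.I * hc
      have h1 : ωc ^ (-j) * ωc ^ (j' : ℤ) = ωc ^ (j' - j) := by
        rw [← zpow_add₀ ωc_ne]
        congr 1
        ring
      rw [← h1, ← h2]
      ring
    -- fundamental domain bookkeeping
    haveI : Countable ((lat a0).prod (⊥ : AddSubgroup ℝ)) := latProd_countable a0
    haveI hliPt : (volume : Measure Pt).IsAddLeftInvariant :=
      (inferInstance : ((volume : Measure ℝ).prod volume).IsAddLeftInvariant)
    haveI hli : (volume : Measure (Pt × ℝ)).IsAddLeftInvariant :=
      (inferInstance : ((volume : Measure Pt).prod (volume : Measure ℝ)).IsAddLeftInvariant)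
    haveI : VAddInvariantMeasure ((lat a0).prod (⊥ : AddSubgroup ℝ)) (Pt × ℝ) volume :=
      ⟨fun c s _ => by
        show volume ((fun x => (c : Pt × ℝ) + x) ⁻¹' s) = volume s
        exact measure_preimage_add volume _ s⟩
    have hFD1 := fd_prod a0 hΩ
    have hFD2 := fd_prod a0 (fd_rot a0 hΩ)
    have hFper : LPeriodic a0 (fun x z => ((V x z + W z : ℝ) : ℂ) * u j x z) := by
      intro R hR x z
      simp only [hVper R hR, huper j hj R hR]
    have hper : ∀ (g : (lat a0).prod (⊥ : AddSubgroup ℝ)) (p : Pt × ℝ),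
        braFn d 1 (-1) (fun x z => ((V x z + W z : ℝ) : ℂ) * u j x z) (u j')
          (rotA (-(2 * π / 3)) X) (g +ᵥ p) =
        braFn d 1 (-1) (fun x z => ((V x z + W z : ℝ) : ℂ) * u j x z) (u j')
          (rotA (-(2 * π / 3)) X) p :=
      fun g p => braFn_vadd a0 d _ _ hFper (huper j' hj') _ g p
    -- change of variables
    have hT : MeasurePreserving (fun p : Pt × ℝ => (rotA (-(2 * π / 3)) p.1, p.2))
        volume volume := (rot_mp (-(2 * π / 3))).prod (MeasurePreserving.id volume)
    have hTemb : MeasurableEmbedding (fun p : Pt × ℝ => (rotA (-(2 * π / 3)) p.1, p.2)) := rotEmb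
    have himg : (rotA (-(2 * π / 3)) '' Ω) ×ˢ (Set.univ : Set ℝ) =
        (fun p : Pt × ℝ => (rotA (-(2 * π / 3)) p.1, p.2)) '' (Ω ×ˢ (Set.univ : Set ℝ)) := by
      ext p
      constructor
      · intro hp
        obtain ⟨x, hx, hxe⟩ := hp.1
        exact ⟨(x, p.2), ⟨hx, trivial⟩, Prod.ext hxe rfl⟩
      · rintro ⟨q, hq, rfl⟩
        exact ⟨⟨q.1, hq.1, rfl⟩, trivial⟩
    have hbra : bra d Ω 1 (-1) (fun x z => ((V x z + W z : ℝ) : ℂ) * u j x z) (u j')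
        (rotA (-(2 * π / 3)) X) =
        (ωc ^ (j' - j) * Complex.exp (Complex.I *
            (dot (Kpt a0 - rotA (2 * π / 3) (Kpt a0)) (Jmat X) : ℂ))) *
          bra d Ω 1 (-1) (fun x z => ((V x z + W z : ℝ) : ℂ) * u j x z) (u j') X := by
      show (∫ p in Ω ×ˢ (Set.univ : Set ℝ), _) = _
      rw [hFD1.setIntegral_eq hFD2 hper, himg, hT.setIntegral_image_emb hTemb]
      simp only [hpt]
      rw [MeasureTheory.integral_const_mul]
      rfl
    -- final phase bookkeeping
    rw [h𝕍, h𝕍, hbra]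
    have hph : -(dot (Jmat (Kpt a0)) (rotA (-(2 * π / 3)) X)) +
        dot (Kpt a0 - rotA (2 * π / 3) (Kpt a0)) (Jmat X) = -(dot (Jmat (Kpt a0)) X) := by
      simp only [dot, Jmat, rotA, Prod.fst_sub, Prod.snd_sub, Real.cos_neg, Real.sin_neg]
      ring
    have hexp : Complex.exp (-Complex.I * ((dot (Jmat (Kpt a0)) (rotA (-(2 * π / 3)) X) : ℝ) : ℂ)) *
        Complex.exp (Complex.I *
          ((dot (Kpt a0 - rotA (2 * π / 3) (Kpt a0)) (Jmat X) : ℝ) : ℂ)) =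
        Complex.exp (-Complex.I * ((dot (Jmat (Kpt a0)) X : ℝ) : ℂ)) := by
      rw [← Complex.exp_add]
      congr 1
      have hc := congrArg (fun r : ℝ => (r : ℂ)) hph
      push_cast at hc
      linear_combination Complex.I * hc
    rw [← hexp]
    ring
  refine ⟨main, ?_, ?_, ?_, ?_⟩
  · intro X
    have h := main 1 (by simp) 1 (by simp) X
    simpa using h
  · intro X
    have h := main 2 (by simp) 2 (by simp) X
    simpa using h
  · intro X
    have h := main 1 (by simp) 2 (by simp) X
    simpa using h
  · intro X
    have h := main 2 (by simp) 1 (by simp) X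
    rw [h, show ((1 : ℤ) - 2) = -1 by ring, zpow_neg, zpow_one, ← conj_ωc]
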